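/- Let ν > −1 be an integer, q > 0, and let f : [0,∞) → ℝ be continuously differentiable with x f(x) J_ν(qx) → 0 as x → 0⁺ and as x → ∞, and suppose the improper integrals ∫₀^∞ x f(x) J_{ν+1}(qx) dx, ∫₀^∞ x f(x) J_{ν−1}(qx) dx and ∫₀^∞ x f'(x) J_ν(qx) dx all converge. Then (ν − 1) ∫₀^∞ x f(x) J_{ν+1}(qx) dx = (ν + 1) ∫₀^∞ x f(x) J_{ν−1}(qx) dx + (2ν/q) ∫₀^∞ x f'(x) J_ν(qx) dx. -/

import Mathlib

set_option linter.unreachableTactic false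
set_option linter.unusedTactic false
set_option linter.unnecessarySeqFocus false
set_option linter.unnecessarySimpa false
set_option maxHeartbeats 1000000

open MeasureTheory Filter Topology Real Set

/-- Bessel function of the first kind of integer order `n ≥ 0`:
`J_n(z) = ∑ (-1)^m (z/2)^(2m+n) / (m! (m+n)!)`. -/
noncomputable def besselJ (n : ℕ) (z : ℝ) : ℝ :=
  ∑' m : ℕ, (-1 : ℝ) ^ m * (z / 2) ^ (2 * m + n) /
    ((Nat.factorial m : ℝ) * (Nat.factorial (m + n) : ℝ))

/-- Bessel function of the first kind of arbitrary integer order, with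
`J_{-n}(z) = (-1)^n J_n(z)`; in particular `J_{-1} = -J_1`. -/
noncomputable def besselJZ (n : ℤ) (z : ℝ) : ℝ :=
  if 0 ≤ n then besselJ n.toNat z else (-1 : ℝ) ^ (-n).toNat * besselJ (-n).toNat z

/-- `f` has `L` as its improper Riemann integral over `[0, ∞)`. -/
def HasImproperIntegral (f : ℝ → ℝ) (L : ℝ) : Prop :=
  Tendsto (fun R : ℝ => ∫ x in (0:ℝ)..R, f x) atTop (𝓝 L)


noncomputable def bterm (n m : ℕ) (z : ℝ) : ℝ :=
  (-1 : ℝ) ^ m * (z / 2) ^ (2 * m + n) /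
    ((Nat.factorial m : ℝ) * (Nat.factorial (m + n) : ℝ))

noncomputable def bterm' (n m : ℕ) (z : ℝ) : ℝ :=
  (-1 : ℝ) ^ m * (((2 * m + n : ℕ) : ℝ) * (z / 2) ^ (2 * m + n - 1) * (1 / 2)) /
    ((Nat.factorial m : ℝ) * (Nat.factorial (m + n) : ℝ))


lemma besselJ_eq (n : ℕ) (z : ℝ) : besselJ n z = ∑' m : ℕ, bterm n m z := rfl

noncomputable def besselJD (n : ℕ) (z : ℝ) : ℝ := ∑' m : ℕ, bterm' n m z

lemma bterm_hasDerivAt (n m : ℕ) (z : ℝ) : HasDerivAt (bterm n m) (bterm' n m z) z := by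
  have h : HasDerivAt (fun y : ℝ => (y / 2) ^ (2 * m + n))
      (((2 * m + n : ℕ) : ℝ) * (z / 2) ^ (2 * m + n - 1) * (1 / 2)) z := by
    simpa using ((hasDerivAt_id z).div_const 2).fun_pow (2 * m + n)
  have h2 := (h.const_mul ((-1 : ℝ) ^ m)).div_const
      ((Nat.factorial m : ℝ) * (Nat.factorial (m + n) : ℝ))
  have hfun : (fun x => (-1 : ℝ) ^ m * (x / 2) ^ (2 * m + n) /
      ((Nat.factorial m : ℝ) * (Nat.factorial (m + n) : ℝ))) = bterm n m := by
    funext x; rw [bterm]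
  have hval : (-1 : ℝ) ^ m * (((2 * m + n : ℕ) : ℝ) * (z / 2) ^ (2 * m + n - 1) * (1 / 2)) /
      ((Nat.factorial m : ℝ) * (Nat.factorial (m + n) : ℝ)) = bterm' n m z := by
    rw [bterm']
  rw [← hfun, ← hval]
  convert h2 using 2 <;> ring

lemma summable_bound (c : ℝ) (n : ℕ) :
    Summable (fun m : ℕ => c ^ (2 * m + n) / (Nat.factorial m : ℝ)) := by
  have := (Real.summable_pow_div_factorial (c ^ 2)).mul_right (c ^ n)
  refine this.congr fun m => ?_
  rw [pow_add, pow_mul]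
  ring

lemma bterm_bound (n m : ℕ) (R z : ℝ) (hz : |z| ≤ R) :
    |bterm n m z| ≤ (2 * max R 1) ^ (2 * m + n) / (Nat.factorial m : ℝ) := by
  set M := max R 1 with hM
  have hM1 : (1 : ℝ) ≤ M := le_max_right _ _
  have hM0 : (0 : ℝ) ≤ M := by linarith
  have hzM : |z / 2| ≤ M := by
    rw [abs_div]
    have : |z| ≤ M := le_trans hz (le_max_left _ _)
    have h2 : |(2:ℝ)| = 2 := by norm_num
    rw [h2]
    linarith [abs_nonneg z]
  have hfac : (1 : ℝ) ≤ (Nat.factorial (m + n) : ℝ) := by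
    exact_mod_cast Nat.one_le_iff_ne_zero.mpr (Nat.factorial_ne_zero _)
  have hfacm : (0 : ℝ) < (Nat.factorial m : ℝ) := by
    exact_mod_cast Nat.factorial_pos m
  have habs : |bterm n m z| = |z / 2| ^ (2 * m + n) /
      ((Nat.factorial m : ℝ) * (Nat.factorial (m + n) : ℝ)) := by
    rw [bterm, abs_div, abs_mul, abs_pow, abs_pow, abs_neg, abs_one, one_pow, one_mul,
      abs_mul, Nat.abs_cast, Nat.abs_cast]
  rw [habs]
  calc |z / 2| ^ (2 * m + n) / ((Nat.factorial m : ℝ) * (Nat.factorial (m + n) : ℝ))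
      ≤ M ^ (2 * m + n) / ((Nat.factorial m : ℝ) * 1) := by
        gcongr <;> first | exact abs_nonneg _ | positivity | linarith
    _ ≤ (2 * M) ^ (2 * m + n) / (Nat.factorial m : ℝ) := by
        rw [mul_one]
        gcongr <;> try linarith

lemma bterm'_bound (n m : ℕ) (R z : ℝ) (hz : |z| ≤ R) :
    |bterm' n m z| ≤ (2 * max R 1) ^ (2 * m + n) / (Nat.factorial m : ℝ) := by
  set M := max R 1 with hM
  have hM1 : (1 : ℝ) ≤ M := le_max_right _ _
  have hM0 : (0 : ℝ) ≤ M := by linarith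
  have hzM : |z / 2| ≤ M := by
    rw [abs_div]
    have : |z| ≤ M := le_trans hz (le_max_left _ _)
    have h2 : |(2:ℝ)| = 2 := by norm_num
    rw [h2]
    linarith [abs_nonneg z]
  have hfac : (1 : ℝ) ≤ (Nat.factorial (m + n) : ℝ) := by
    exact_mod_cast Nat.one_le_iff_ne_zero.mpr (Nat.factorial_ne_zero _)
  have habs : |bterm' n m z| = (((2 * m + n : ℕ) : ℝ) * |z / 2| ^ (2 * m + n - 1) * (1 / 2)) /
      ((Nat.factorial m : ℝ) * (Nat.factorial (m + n) : ℝ)) := by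
    rw [bterm', abs_div, abs_mul, abs_pow, abs_neg, abs_one, one_pow, one_mul,
      abs_mul, abs_mul, abs_pow, Nat.abs_cast, abs_mul, Nat.abs_cast, Nat.abs_cast]
    have h12 : |(1:ℝ)/2| = 1/2 := by norm_num
    rw [h12]
  rw [habs]
  have hpow : |z / 2| ^ (2 * m + n - 1) ≤ M ^ (2 * m + n) := by
    calc |z / 2| ^ (2 * m + n - 1) ≤ M ^ (2 * m + n - 1) := by
          gcongr <;> try exact abs_nonneg _
      _ ≤ M ^ (2 * m + n) := pow_le_pow_right₀ hM1 (Nat.sub_le _ _)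
  have hcoef : ((2 * m + n : ℕ) : ℝ) ≤ 2 ^ (2 * m + n) := by
    exact_mod_cast (Nat.lt_two_pow_self (n := 2 * m + n)).le
  calc (((2 * m + n : ℕ) : ℝ) * |z / 2| ^ (2 * m + n - 1) * (1 / 2)) /
        ((Nat.factorial m : ℝ) * (Nat.factorial (m + n) : ℝ))
      ≤ ((2 : ℝ) ^ (2 * m + n) * M ^ (2 * m + n) * 1) / ((Nat.factorial m : ℝ) * 1) := by
        gcongr <;> first | positivity | linarith
    _ = (2 * M) ^ (2 * m + n) / (Nat.factorial m : ℝ) := by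
        rw [mul_pow]; ring

lemma summable_bterm (n : ℕ) (z : ℝ) : Summable (fun m => bterm n m z) :=
  Summable.of_norm_bounded (summable_bound (2 * max (|z|) 1) n)
    fun m => by simpa using bterm_bound n m (|z|) z le_rfl

lemma summable_bterm' (n : ℕ) (z : ℝ) : Summable (fun m => bterm' n m z) :=
  Summable.of_norm_bounded (summable_bound (2 * max (|z|) 1) n)
    fun m => by simpa using bterm'_bound n m (|z|) z le_rfl

lemma besselJ_hasDerivAt (n : ℕ) (z : ℝ) : HasDerivAt (besselJ n) (besselJD n z) z := by
  have key : HasDerivAt (fun y => ∑' m : ℕ, bterm n m y) (∑' m : ℕ, bterm' n m z) z := by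
    refine hasDerivAt_tsum_of_isPreconnected
      (u := fun m : ℕ => (2 * max (|z| + 1) 1) ^ (2 * m + n) / (Nat.factorial m : ℝ))
      (summable_bound _ n) Metric.isOpen_ball (convex_ball (0:ℝ) (|z|+1)).isPreconnected
      (fun m y _ => bterm_hasDerivAt n m y) (fun m y hy => ?_) ?_ (summable_bterm n z) ?_
    · have : |y| ≤ |z| + 1 := by
        have := Metric.mem_ball.mp hy
        rw [Real.dist_eq, sub_zero] at this
        linarith
      simpa using bterm'_bound n m (|z| + 1) y this
    · rw [Metric.mem_ball, Real.dist_eq, sub_zero]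
      simpa using abs_nonneg z
    · rw [Metric.mem_ball, Real.dist_eq, sub_zero]
      linarith [le_abs_self (|z|), abs_abs z]
  have : besselJ n = fun y => ∑' m : ℕ, bterm n m y := by funext y; rfl
  rw [this, besselJD]
  exact key

lemma besselJ_continuous (n : ℕ) : Continuous (besselJ n) :=
  continuous_iff_continuousAt.mpr fun z => (besselJ_hasDerivAt n z).continuousAt

lemma term_idA (n m : ℕ) (z : ℝ) :
    z * bterm' (n + 1) m z + ((n : ℝ) + 1) * bterm (n + 1) m z = z * bterm n m z := by
  rw [bterm, bterm', bterm]
  have h1 : 2 * m + (n + 1) = (2 * m + n) + 1 := by omega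
  have h2 : m + (n + 1) = (m + n) + 1 := by omega
  rw [h1, h2, Nat.add_sub_cancel, Nat.factorial_succ]
  have hf1 : ((Nat.factorial m : ℝ)) ≠ 0 := by
    exact_mod_cast Nat.factorial_ne_zero m
  have hf2 : ((Nat.factorial (m + n) : ℝ)) ≠ 0 := by
    exact_mod_cast Nat.factorial_ne_zero (m + n)
  have hf3 : ((m : ℝ) + n + 1) ≠ 0 := by positivity
  push_cast
  field_simp
  ring

lemma term_idB0 (n : ℕ) (z : ℝ) :
    z * bterm' n 0 z - (n : ℝ) * bterm n 0 z = 0 := by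
  rw [bterm, bterm']
  rcases Nat.eq_zero_or_pos n with h | h
  · subst h; norm_num
  · have h1 : 2 * 0 + n = (n - 1) + 1 := by omega
    rw [h1, Nat.add_sub_cancel, Nat.factorial]
    push_cast [h1]
    field_simp
    simp only [Nat.cast_sub (show 1 ≤ n by omega), Nat.cast_one]
    ring

lemma term_idB_succ (n m : ℕ) (z : ℝ) :
    z * bterm' n (m + 1) z - (n : ℝ) * bterm n (m + 1) z = -(z * bterm (n + 1) m z) := by
  rw [bterm, bterm', bterm]
  have h1 : 2 * (m + 1) + n = (2 * m + n + 1) + 1 := by omega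
  have h2 : (m + 1) + n = (m + n) + 1 := by omega
  have h3 : 2 * m + (n + 1) = 2 * m + n + 1 := by omega
  have h4 : m + (n + 1) = (m + n) + 1 := by omega
  rw [h1, h2, h3, h4, Nat.add_sub_cancel, Nat.factorial_succ m, Nat.factorial_succ (m + n)]
  have hf1 : ((Nat.factorial m : ℝ)) ≠ 0 := by exact_mod_cast Nat.factorial_ne_zero m
  have hf2 : ((Nat.factorial (m + n) : ℝ)) ≠ 0 := by exact_mod_cast Nat.factorial_ne_zero (m + n)
  have hf3 : ((m : ℝ) + n + 1) ≠ 0 := by positivity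
  have hf4 : ((m : ℝ) + 1) ≠ 0 := by positivity
  push_cast
  field_simp
  ring

lemma idA (n : ℕ) (z : ℝ) :
    z * besselJD (n + 1) z + ((n : ℝ) + 1) * besselJ (n + 1) z = z * besselJ n z := by
  rw [besselJD, besselJ_eq, besselJ_eq, ← tsum_mul_left, ← tsum_mul_left, ← tsum_mul_left,
    ← Summable.tsum_add ((summable_bterm' (n + 1) z).mul_left z) ((summable_bterm (n + 1) z).mul_left _)]
  exact tsum_congr fun m => term_idA n m z

lemma idB (n : ℕ) (z : ℝ) :
    z * besselJD n z - (n : ℝ) * besselJ n z = -(z * besselJ (n + 1) z) := by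
  have hg : Summable (fun m => z * bterm' n m z - (n : ℝ) * bterm n m z) :=
    ((summable_bterm' n z).mul_left z).sub ((summable_bterm n z).mul_left _)
  have step1 : z * besselJD n z - (n : ℝ) * besselJ n z
      = ∑' m, (z * bterm' n m z - (n : ℝ) * bterm n m z) := by
    rw [besselJD, besselJ_eq, ← tsum_mul_left, ← tsum_mul_left,
      ← Summable.tsum_sub ((summable_bterm' n z).mul_left z) ((summable_bterm n z).mul_left _)]
  rw [step1, hg.tsum_eq_zero_add, term_idB0]
  simp only [term_idB_succ]
  rw [tsum_neg, tsum_mul_left, zero_add, ← besselJ_eq]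

lemma main_hasDerivAt (k : ℕ) (q : ℝ) (f : ℝ → ℝ) (hf : ContDiff ℝ 1 f) (x : ℝ) :
    HasDerivAt (fun x : ℝ => x * f x * besselJ (k + 1) (q * x))
      (q / (2 * ((k : ℝ) + 1)) * (((k : ℝ) + 2) * (x * f x * besselJ k (q * x))
        - (k : ℝ) * (x * f x * besselJ (k + 2) (q * x)))
        + x * deriv f x * besselJ (k + 1) (q * x)) x := by
  have hf' : HasDerivAt f (deriv f x) x :=
    ((hf.differentiable one_ne_zero) x).hasDerivAt
  have hx : HasDerivAt (fun x : ℝ => x * f x) (1 * f x + x * deriv f x) x :=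
    (hasDerivAt_id x).mul hf'
  have hin : HasDerivAt (fun y : ℝ => q * y) (q * 1) x := (hasDerivAt_id x).const_mul q
  have hJ : HasDerivAt (fun x : ℝ => besselJ (k + 1) (q * x))
      (besselJD (k + 1) (q * x) * (q * 1)) x :=
    (besselJ_hasDerivAt (k + 1) (q * x)).comp x hin
  have h := hx.mul hJ
  have ha := idA k (q * x)
  have hb := idB (k + 1) (q * x)
  push_cast at ha hb
  have heq : (1 * f x + x * deriv f x) * besselJ (k + 1) (q * x)
      + (x * f x) * (besselJD (k + 1) (q * x) * (q * 1))
      = q / (2 * ((k : ℝ) + 1)) * (((k : ℝ) + 2) * (x * f x * besselJ k (q * x))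
        - (k : ℝ) * (x * f x * besselJ (k + 2) (q * x)))
        + x * deriv f x * besselJ (k + 1) (q * x) := by
    have hc : ((k : ℝ) + 1) ≠ 0 := by positivity
    rw [show k + 1 + 1 = k + 2 from rfl] at hb
    field_simp
    rw [show x * q = q * x from mul_comm x q]
    linear_combination (f x * ((k : ℝ) + 2)) * ha + (f x * (k : ℝ)) * hb
  rw [← heq]
  exact h

lemma besselJZ_natCast (j : ℕ) (z : ℝ) : besselJZ (j : ℤ) z = besselJ j z := by
  simp [besselJZ]

lemma besselJZ_neg_one (z : ℝ) : besselJZ (-1) z = -besselJ 1 z := by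
  norm_num [besselJZ]

lemma cont_aux (j : ℕ) (q : ℝ) (g : ℝ → ℝ) (hg : Continuous g) :
    Continuous (fun x : ℝ => x * g x * besselJ j (q * x)) :=
  (continuous_id.mul hg).mul ((besselJ_continuous j).comp (continuous_const.mul continuous_id))

theorem bessel_recurrence_integrals
    (ν : ℤ) (hν : -1 < ν) (q : ℝ) (hq : 0 < q) (f : ℝ → ℝ) (hf : ContDiff ℝ 1 f)
    (hlim0 : Tendsto (fun x : ℝ => x * f x * besselJZ ν (q * x)) (𝓝[>] 0) (𝓝 0))
    (hliminf : Tendsto (fun x : ℝ => x * f x * besselJZ ν (q * x)) atTop (𝓝 0))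
    (L₁ L₂ L₃ : ℝ)
    (h₁ : HasImproperIntegral (fun x : ℝ => x * f x * besselJZ (ν + 1) (q * x)) L₁)
    (h₂ : HasImproperIntegral (fun x : ℝ => x * f x * besselJZ (ν - 1) (q * x)) L₂)
    (h₃ : HasImproperIntegral (fun x : ℝ => x * deriv f x * besselJZ ν (q * x)) L₃) :
    ((ν : ℝ) - 1) * L₁ = ((ν : ℝ) + 1) * L₂ + (2 * (ν : ℝ) / q) * L₃ := by
  rcases lt_or_ge ν 1 with hν1 | hν1
  · -- ν = 0
    have hν0 : ν = 0 := by omega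
    subst hν0
    have he : (fun x : ℝ => x * f x * besselJZ (0 - 1) (q * x))
        = fun x : ℝ => -(x * f x * besselJZ (0 + 1) (q * x)) := by
      funext x
      rw [show ((0:ℤ) - 1) = -1 by norm_num, besselJZ_neg_one,
        show ((0:ℤ) + 1) = ((1:ℕ):ℤ) by norm_num, besselJZ_natCast]
      ring
    rw [HasImproperIntegral, he] at h₂
    have h₂' : Tendsto (fun R : ℝ => -∫ x in (0:ℝ)..R, x * f x * besselJZ (0 + 1) (q * x))
        atTop (𝓝 L₂) := by
      refine h₂.congr fun R => ?_
      rw [intervalIntegral.integral_neg]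
    have := tendsto_nhds_unique h₂' h₁.neg
    push_cast
    rw [this]
    ring
  · -- ν ≥ 1
    obtain ⟨k, hk⟩ : ∃ k : ℕ, ν = (k : ℤ) + 1 := ⟨(ν - 1).toNat, by omega⟩
    subst hk
    have e0 : ∀ z : ℝ, besselJZ ((k : ℤ) + 1) z = besselJ (k + 1) z := by
      intro z
      rw [show ((k : ℤ) + 1) = ((k + 1 : ℕ) : ℤ) by push_cast; ring, besselJZ_natCast]
    have e1 : ∀ z : ℝ, besselJZ ((k : ℤ) + 1 + 1) z = besselJ (k + 2) z := by
      intro z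
      rw [show ((k : ℤ) + 1 + 1) = ((k + 2 : ℕ) : ℤ) by push_cast; ring, besselJZ_natCast]
    have e2 : ∀ z : ℝ, besselJZ ((k : ℤ) + 1 - 1) z = besselJ k z := by
      intro z
      rw [show ((k : ℤ) + 1 - 1) = ((k : ℕ) : ℤ) by push_cast; ring, besselJZ_natCast]
    simp only [e0, e1, e2] at hliminf h₁ h₂ h₃ ⊢
    set c : ℝ := (k : ℝ) + 1 with hc
    have hcont_f := hf.continuous
    have hcont_f' := hf.continuous_deriv le_rfl
    have ci1 : Continuous fun x : ℝ => x * f x * besselJ (k + 2) (q * x) := cont_aux _ _ _ hcont_f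
    have ci2 : Continuous fun x : ℝ => x * f x * besselJ k (q * x) := cont_aux _ _ _ hcont_f
    have ci3 : Continuous fun x : ℝ => x * deriv f x * besselJ (k + 1) (q * x) :=
      cont_aux _ _ _ hcont_f'
    have key : ∀ R : ℝ, R * f R * besselJ (k + 1) (q * R)
        = q / (2 * c) * (((k : ℝ) + 2) * (∫ x in (0:ℝ)..R, x * f x * besselJ k (q * x))
            - (k : ℝ) * (∫ x in (0:ℝ)..R, x * f x * besselJ (k + 2) (q * x)))
          + ∫ x in (0:ℝ)..R, x * deriv f x * besselJ (k + 1) (q * x) := by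
      intro R
      have hftc := intervalIntegral.integral_eq_sub_of_hasDerivAt
        (f := fun x : ℝ => x * f x * besselJ (k + 1) (q * x))
        (f' := fun x : ℝ => q / (2 * c) * (((k : ℝ) + 2) * (x * f x * besselJ k (q * x))
            - (k : ℝ) * (x * f x * besselJ (k + 2) (q * x)))
          + x * deriv f x * besselJ (k + 1) (q * x))
        (a := 0) (b := R)
        (fun x _ => main_hasDerivAt k q f hf x)
        (by
          apply Continuous.intervalIntegrable
          exact (continuous_const.mul ((continuous_const.mul ci2).sub
            (continuous_const.mul ci1))).add ci3)
      rw [intervalIntegral.integral_add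
            ((continuous_const.fun_mul ((continuous_const.fun_mul ci2).fun_sub
              (continuous_const.fun_mul ci1))).intervalIntegrable _ _)
            (ci3.intervalIntegrable _ _),
          intervalIntegral.integral_const_mul,
          intervalIntegral.integral_sub
            ((continuous_const.fun_mul ci2).intervalIntegrable _ _)
            ((continuous_const.fun_mul ci1).intervalIntegrable _ _),
          intervalIntegral.integral_const_mul, intervalIntegral.integral_const_mul] at hftc
      rw [hftc]
      norm_num
    have hRHS : Tendsto (fun R : ℝ =>
        q / (2 * c) * (((k : ℝ) + 2) * (∫ x in (0:ℝ)..R, x * f x * besselJ k (q * x))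
            - (k : ℝ) * (∫ x in (0:ℝ)..R, x * f x * besselJ (k + 2) (q * x)))
          + ∫ x in (0:ℝ)..R, x * deriv f x * besselJ (k + 1) (q * x)) atTop
        (𝓝 (q / (2 * c) * (((k : ℝ) + 2) * L₂ - (k : ℝ) * L₁) + L₃)) :=
      (((h₂.const_mul _).sub (h₁.const_mul _)).const_mul _).add h₃
    have hLHS : Tendsto (fun R : ℝ => R * f R * besselJ (k + 1) (q * R)) atTop (𝓝 0) := hliminf
    have hmain : (0 : ℝ) = q / (2 * c) * (((k : ℝ) + 2) * L₂ - (k : ℝ) * L₁) + L₃ := by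
      refine tendsto_nhds_unique ?_ hRHS
      exact hLHS.congr key
    have hc0 : c ≠ 0 := by positivity
    have hq0 : q ≠ 0 := ne_of_gt hq
    push_cast
    rw [hc] at hmain
    field_simp at hmain ⊢
    linarith
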